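/- A finitely generated subgroup H of PSL_2(Z) is almost malnormal if and only if there do not exist two distinct vertices p, q in its Stallings graph and an infinite-order element g of PSL_2(Z) whose normal form labels cycles at both p and q. -/

import Mathlib

/-- Relators of the presentation `⟨a, b ∣ a² = b³ = 1⟩`. -/
def pslRels : Set (FreeGroup Bool) := {FreeGroup.of true ^ 2, FreeGroup.of false ^ 3}

/-- The modular group `PSL₂(ℤ) = ⟨a, b ∣ a² = b³ = 1⟩ = ℤ/2 * ℤ/3`. -/
abbrev PSL2Z : Type := PresentedGroup pslRels

/-- The order-2 generator `a`. -/
def gen_a : PSL2Z := PresentedGroup.of true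

/-- The order-3 generator `b`. -/
def gen_b : PSL2Z := PresentedGroup.of false

/-- The alphabet `{a, b, b⁻¹}`. -/
inductive Letter : Type
  | A | B | Binv
deriving DecidableEq

/-- Interpretation of a letter in `PSL₂(ℤ)`. -/
def Letter.toG : Letter → PSL2Z
  | .A => gen_a
  | .B => gen_b
  | .Binv => gen_b⁻¹

/-- Evaluation of a word over `{a, b, b⁻¹}` in `PSL₂(ℤ)`. -/
def evalWord (w : List Letter) : PSL2Z := (w.map Letter.toG).prod

/-- Two adjacent letters alternate between `a` and `{b, b⁻¹}`. -/
def AltPair (x y : Letter) : Prop := (x = .A ∧ y ≠ .A) ∨ (x ≠ .A ∧ y = .A)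

/-- A word is in normal form (freely reduced, no factor `a²`, `b²`, `b⁻²`):
it has length ≤ 1 or alternates `a` with letters in `{b, b⁻¹}`. -/
def NormalWord (w : List Letter) : Prop := w.Chain' AltPair

/- ====================  basics  ==================== -/

theorem rel_a : gen_a ^ 2 = 1 := by
  have : (QuotientGroup.mk (FreeGroup.of true ^ 2) : PSL2Z) = 1 := by
    rw [QuotientGroup.eq_one_iff]
    exact Subgroup.subset_normalClosure (by left; rfl)
  simp at this; exact this

theorem rel_b : gen_b ^ 3 = 1 := by
  have : (QuotientGroup.mk (FreeGroup.of false ^ 3) : PSL2Z) = 1 := by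
    rw [QuotientGroup.eq_one_iff]
    exact Subgroup.subset_normalClosure (by right; rfl)
  simp at this; exact this

theorem a_mul_a : gen_a * gen_a = 1 := by have := rel_a; rwa [pow_two] at this
theorem b_mul_b : gen_b * gen_b = gen_b⁻¹ := by
  have := rel_b
  rw [pow_succ, pow_two] at this
  exact eq_inv_of_mul_eq_one_left this
theorem b_cube : gen_b * gen_b * gen_b = 1 := by
  have := rel_b; rwa [pow_succ, pow_two] at this
theorem binv_mul_binv : gen_b⁻¹ * gen_b⁻¹ = gen_b := by
  rw [← b_mul_b, show gen_b * gen_b * (gen_b * gen_b) = gen_b * gen_b * gen_b * gen_b by group,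
    b_cube, one_mul]

@[simp] theorem evalWord_nil : evalWord [] = 1 := rfl
theorem evalWord_cons (ℓ : Letter) (w : List Letter) :
    evalWord (ℓ :: w) = ℓ.toG * evalWord w := by
  simp [evalWord]
theorem evalWord_append (u v : List Letter) :
    evalWord (u ++ v) = evalWord u * evalWord v := by
  simp [evalWord]
theorem evalWord_singleton (ℓ : Letter) : evalWord [ℓ] = ℓ.toG := by
  simp [evalWord]

/-- whether a letter is the `a`-letter -/
def tyA : Letter → Bool
  | .A => true
  | _ => false

theorem altPair_iff (x y : Letter) : AltPair x y ↔ tyA x ≠ tyA y := by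
  cases x <;> cases y <;> simp [AltPair, tyA]

theorem altPair_congr {x y y' : Letter} (h : tyA y = tyA y') :
    AltPair x y ↔ AltPair x y' := by
  rw [altPair_iff, altPair_iff, h]

theorem altPair_symm {x y : Letter} (h : AltPair x y) : AltPair y x := by
  rw [altPair_iff] at h ⊢; exact h.symm

/- ====================  the normal-form action  ==================== -/

/-- prepend-and-reduce by `a` -/
def fA : List Letter → List Letter
  | .A :: t => t
  | w => .A :: w

/-- prepend-and-reduce by `b` -/
def fB : List Letter → List Letter
  | .B :: t => .Binv :: t
  | .Binv :: t => t
  | w => .B :: w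

/-- prepend-and-reduce by a letter -/
def fL : Letter → List Letter → List Letter
  | .A, w => fA w
  | .B, w => fB w
  | .Binv, w => fB (fB w)

theorem normal_tail {ℓ : Letter} {t : List Letter} (h : NormalWord (ℓ :: t)) :
    NormalWord t := List.IsChain.tail h

theorem normal_head {ℓ : Letter} {t : List Letter} (h : NormalWord (ℓ :: t)) :
    ∀ y ∈ t.head?, AltPair ℓ y := by
  intro y hy
  exact (List.isChain_cons.1 h).1 y hy

theorem normal_cons {ℓ : Letter} {t : List Letter} (ht : NormalWord t)
    (h : ∀ y ∈ t.head?, AltPair ℓ y) : NormalWord (ℓ :: t) :=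
  List.isChain_cons.2 ⟨h, ht⟩

theorem presA {w : List Letter} (h : NormalWord w) : NormalWord (fA w) := by
  match w with
  | [] => exact List.isChain_singleton _
  | .A :: t => exact normal_tail h
  | .B :: t => exact normal_cons h (by intro y hy; simp at hy; subst hy; left; simp)
  | .Binv :: t => exact normal_cons h (by intro y hy; simp at hy; subst hy; left; simp)

theorem presB {w : List Letter} (h : NormalWord w) : NormalWord (fB w) := by
  match w with
  | [] => exact List.isChain_singleton _
  | .A :: t => exact normal_cons h (by intro y hy; simp at hy; subst hy; right; simp)
  | .B :: t =>
    refine normal_cons (normal_tail h) ?_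
    intro y hy
    have := normal_head h y hy
    rw [altPair_iff] at this ⊢; simpa [tyA] using this
  | .Binv :: t => exact normal_tail h

theorem fA_fA {w : List Letter} (h : NormalWord w) : fA (fA w) = w := by
  match w with
  | [] => rfl
  | .A :: t =>
    have := normal_head h
    match t, this with
    | [], _ => rfl
    | .A :: s, hh => exact absurd (hh .A rfl) (by simp [AltPair])
    | .B :: s, _ => rfl
    | .Binv :: s, _ => rfl
  | .B :: t => rfl
  | .Binv :: t => rfl

theorem fB_fB_fB {w : List Letter} (h : NormalWord w) : fB (fB (fB w)) = w := by
  match w with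
  | [] => rfl
  | .A :: t => rfl
  | .B :: t =>
    have := normal_head h
    match t, this with
    | [], _ => rfl
    | .A :: s, hh => rfl
    | .B :: s, hh => exact absurd (hh .B rfl) (by simp [AltPair])
    | .Binv :: s, hh => exact absurd (hh .Binv rfl) (by simp [AltPair])
  | .Binv :: t =>
    have := normal_head h
    match t, this with
    | [], _ => rfl
    | .A :: s, hh => rfl
    | .B :: s, hh => exact absurd (hh .B rfl) (by simp [AltPair])
    | .Binv :: s, hh => exact absurd (hh .Binv rfl) (by simp [AltPair])

/-- The set of normal words. -/
abbrev NW : Type := {w : List Letter // NormalWord w}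

def aPerm : Equiv.Perm NW where
  toFun w := ⟨fA w.1, presA w.2⟩
  invFun w := ⟨fA w.1, presA w.2⟩
  left_inv w := Subtype.ext (fA_fA w.2)
  right_inv w := Subtype.ext (fA_fA w.2)

def bPerm : Equiv.Perm NW where
  toFun w := ⟨fB w.1, presB w.2⟩
  invFun w := ⟨fB (fB w.1), presB (presB w.2)⟩
  left_inv w := Subtype.ext (fB_fB_fB w.2)
  right_inv w := Subtype.ext (by
    have : NormalWord (fB (fB w.1)) := presB (presB w.2)
    show fB (fB (fB w.1)) = w.1
    exact fB_fB_fB w.2)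

def permOf : Bool → Equiv.Perm NW
  | true => aPerm
  | false => bPerm

theorem perm_rels : ∀ r ∈ pslRels, FreeGroup.lift permOf r = 1 := by
  intro r hr
  rcases hr with h | h <;> subst h <;> rw [map_pow, FreeGroup.lift_apply_of]
  · refine Equiv.ext fun w => ?_
    show aPerm (aPerm w) = w
    exact Subtype.ext (fA_fA w.2)
  · refine Equiv.ext fun w => ?_
    show bPerm (bPerm (bPerm w)) = w
    exact Subtype.ext (fB_fB_fB w.2)

/-- The action of `PSL₂(ℤ)` on normal words. -/
def φ : PSL2Z →* Equiv.Perm NW := PresentedGroup.toGroup perm_rels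

theorem φ_letter (ℓ : Letter) (w : NW) : (φ ℓ.toG w).1 = fL ℓ w.1 := by
  cases ℓ
  · show (φ gen_a w).1 = fA w.1
    have : φ gen_a = aPerm := PresentedGroup.toGroup.of perm_rels
    rw [this]; rfl
  · show (φ gen_b w).1 = fB w.1
    have : φ gen_b = bPerm := PresentedGroup.toGroup.of perm_rels
    rw [this]; rfl
  · show (φ gen_b⁻¹ w).1 = fB (fB w.1)
    have : φ gen_b = bPerm := PresentedGroup.toGroup.of perm_rels
    rw [map_inv, this]; rfl

theorem φ_mul (g h : PSL2Z) (w : NW) : φ (g * h) w = φ g (φ h w) := by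
  rw [map_mul]; rfl

/- ====================  eval / action compatibility  ==================== -/

theorem eval_fB (w : List Letter) : evalWord (fB w) = gen_b * evalWord w := by
  match w with
  | [] => simp [fB, evalWord_singleton, Letter.toG]
  | .A :: t => rw [show fB (Letter.A :: t) = Letter.B :: Letter.A :: t from rfl, evalWord_cons]; rfl
  | .B :: t =>
    show evalWord (Letter.Binv :: t) = gen_b * evalWord (Letter.B :: t)
    rw [evalWord_cons, evalWord_cons]
    show gen_b⁻¹ * evalWord t = gen_b * (gen_b * evalWord t)
    rw [← mul_assoc, b_mul_b]
  | .Binv :: t =>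
    show evalWord t = gen_b * evalWord (Letter.Binv :: t)
    rw [evalWord_cons]
    show evalWord t = gen_b * (gen_b⁻¹ * evalWord t)
    rw [← mul_assoc, mul_inv_cancel, one_mul]

theorem eval_fL (ℓ : Letter) (w : List Letter) :
    evalWord (fL ℓ w) = ℓ.toG * evalWord w := by
  cases ℓ
  · show evalWord (fA w) = gen_a * evalWord w
    match w with
    | [] => simp [fA, evalWord_singleton, Letter.toG]
    | .A :: t =>
      show evalWord t = gen_a * evalWord (Letter.A :: t)
      rw [evalWord_cons]
      show evalWord t = gen_a * (gen_a * evalWord t)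
      rw [← mul_assoc, a_mul_a, one_mul]
    | .B :: t => rw [show fA (Letter.B :: t) = Letter.A :: Letter.B :: t from rfl, evalWord_cons]; rfl
    | .Binv :: t => rw [show fA (Letter.Binv :: t) = Letter.A :: Letter.Binv :: t from rfl, evalWord_cons]; rfl
  · exact eval_fB w
  · show evalWord (fB (fB w)) = gen_b⁻¹ * evalWord w
    rw [eval_fB, eval_fB, ← mul_assoc, b_mul_b]

theorem eval_φ (g : PSL2Z) (w : NW) : evalWord (φ g w).1 = g * evalWord w.1 := by
  set P : Subgroup PSL2Z :=
    { carrier := {g | ∀ w : NW, evalWord (φ g w).1 = g * evalWord w.1}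
      one_mem' := by intro w; rw [map_one]; simp
      mul_mem' := by
        intro x y hx hy w
        rw [φ_mul, hx, hy, mul_assoc]
      inv_mem' := by
        intro x hx w
        have := hx (φ x⁻¹ w)
        rw [← φ_mul, mul_inv_cancel, map_one] at this
        have : evalWord w.1 = x * evalWord (φ x⁻¹ w).1 := by simpa using this
        rw [eq_inv_mul_iff_mul_eq, ← this] } with hP
  have hgen : ∀ bb : Bool, PresentedGroup.of bb ∈ P := by
    intro bb
    cases bb
    · intro w
      show evalWord (φ gen_b w).1 = gen_b * evalWord w.1
      rw [show (φ gen_b w).1 = fL .B w.1 from φ_letter .B w]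
      exact eval_fL .B w.1
    · intro w
      show evalWord (φ gen_a w).1 = gen_a * evalWord w.1
      rw [show (φ gen_a w).1 = fL .A w.1 from φ_letter .A w]
      exact eval_fL .A w.1
  exact PresentedGroup.generated_by pslRels P hgen g w

/-- the empty normal word -/
def nwNil : NW := ⟨[], List.isChain_nil⟩

/-- The normal form of a group element. -/
def nf (g : PSL2Z) : List Letter := (φ g nwNil).1

theorem nf_normal (g : PSL2Z) : NormalWord (nf g) := (φ g nwNil).2

theorem eval_nf (g : PSL2Z) : evalWord (nf g) = g := by
  have := eval_φ g nwNil
  simpa [nf, nwNil] using this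

theorem fL_clean {ℓ : Letter} {w : List Letter}
    (h : ∀ y ∈ w.head?, AltPair ℓ y) : fL ℓ w = ℓ :: w := by
  cases ℓ
  · match w with
    | [] => rfl
    | .A :: t => exact absurd (h .A rfl) (by simp [AltPair])
    | .B :: t => rfl
    | .Binv :: t => rfl
  · match w with
    | [] => rfl
    | .A :: t => rfl
    | .B :: t => exact absurd (h .B rfl) (by simp [AltPair])
    | .Binv :: t => exact absurd (h .Binv rfl) (by simp [AltPair])
  · match w with
    | [] => rfl
    | .A :: t => rfl
    | .B :: t => exact absurd (h .B rfl) (by simp [AltPair])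
    | .Binv :: t => exact absurd (h .Binv rfl) (by simp [AltPair])

theorem nf_eval {w : List Letter} (h : NormalWord w) : nf (evalWord w) = w := by
  induction w with
  | nil => simp [nf, nwNil]
  | cons ℓ t ih =>
    rw [evalWord_cons, nf, φ_mul]
    have ht : NormalWord t := normal_tail h
    have : φ (evalWord t) nwNil = ⟨t, ht⟩ := Subtype.ext (ih ht)
    rw [show (φ (evalWord t) nwNil) = ⟨t, ht⟩ from this, φ_letter]
    exact fL_clean (normal_head h)

theorem eval_injective {w w' : List Letter} (hw : NormalWord w) (hw' : NormalWord w')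
    (h : evalWord w = evalWord w') : w = w' := by
  have := nf_eval hw
  rw [h, nf_eval hw'] at this
  exact this.symm

/- ====================  clean prepending and the decomposition lemma  ==================== -/

theorem φ_eval_cons (ℓ : Letter) (d : List Letter) (t : NW) :
    φ (evalWord (ℓ :: d)) t = φ ℓ.toG (φ (evalWord d) t) := by
  rw [evalWord_cons, φ_mul]

theorem φ_eval_concat (d : List Letter) (ℓ : Letter) (t : NW) :
    φ (evalWord (d ++ [ℓ])) t = φ (evalWord d) (φ ℓ.toG t) := by
  rw [evalWord_append, evalWord_singleton, φ_mul]

theorem prep_clean : ∀ (d : List Letter) (t : List Letter) (ht : NormalWord t),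
    NormalWord (d ++ t) → (φ (evalWord d) ⟨t, ht⟩).1 = d ++ t := by
  intro d
  induction d using List.reverseRecOn with
  | nil => intro t ht _; rw [evalWord_nil, map_one]; rfl
  | append_singleton d' ℓ ih =>
    intro t ht h
    rw [φ_eval_concat]
    have h' : NormalWord (d' ++ (ℓ :: t)) := by simpa using h
    have hlt : NormalWord (ℓ :: t) := (List.isChain_append.1 h').2.1
    have : φ ℓ.toG ⟨t, ht⟩ = ⟨ℓ :: t, hlt⟩ := by
      apply Subtype.ext
      rw [φ_letter]
      exact fL_clean (normal_head hlt)
    rw [this, ih (ℓ :: t) hlt h', ← List.append_cons]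

theorem normal_of_append_left {d t : List Letter} (h : NormalWord (d ++ t)) : NormalWord d :=
  (List.isChain_append.1 h).1

theorem normal_of_append_right {d t : List Letter} (h : NormalWord (d ++ t)) : NormalWord t :=
  (List.isChain_append.1 h).2.1

theorem normal_append {d t : List Letter} (hd : NormalWord d) (ht : NormalWord t)
    (hj : ∀ x ∈ d.getLast?, ∀ y ∈ t.head?, AltPair x y) : NormalWord (d ++ t) :=
  List.isChain_append.2 ⟨hd, ht, hj⟩

theorem cancel_helper (d' : List Letter) (ℓ : Letter)
    (ih : ∀ (t : List Letter) (ht : NormalWord t),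
      ∃ ii M jj, ii ≤ d'.length ∧ M.length ≤ 1 ∧ jj ≤ d'.length + 1 ∧ jj ≤ t.length ∧
        d'.length + M.length ≤ jj + ii + 1 ∧
        (φ (evalWord d') ⟨t, ht⟩).1 = d'.take ii ++ M ++ t.drop jj)
    (y : Letter) (t₂ : List Letter) (ht : NormalWord (y :: t₂)) (ht₂ : NormalWord t₂)
    (hstep : φ ℓ.toG ⟨y :: t₂, ht⟩ = ⟨t₂, ht₂⟩) :
    ∃ ii M jj, ii ≤ (d' ++ [ℓ]).length ∧ M.length ≤ 1 ∧ jj ≤ (d' ++ [ℓ]).length + 1 ∧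
      jj ≤ (y :: t₂).length ∧ (d' ++ [ℓ]).length + M.length ≤ jj + ii + 1 ∧
      (φ (evalWord (d' ++ [ℓ])) ⟨y :: t₂, ht⟩).1 =
        (d' ++ [ℓ]).take ii ++ M ++ (y :: t₂).drop jj := by
  obtain ⟨ii, M, jj, b1, b2, b3, b4, b5, heq⟩ := ih t₂ ht₂
  refine ⟨ii, M, jj + 1, by simp; omega, b2, by simp; omega, by simp; omega,
    by simp; omega, ?_⟩
  rw [φ_eval_concat, hstep, heq, List.take_append_of_le_length b1]
  rfl

theorem hlty_aux {ℓ y m : Letter} {t₂ : List Letter} (hyty : tyA y = false)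
    (hfl : fL ℓ (y :: t₂) = m :: t₂) : tyA ℓ = false := by
  match ℓ, y, hyty, hfl with
  | .B, _, _, _ => rfl
  | .Binv, _, _, _ => rfl
  | .A, .B, _, hh =>
    exact absurd (congrArg List.length hh) (by simp [fL, fA])
  | .A, .Binv, _, hh =>
    exact absurd (congrArg List.length hh) (by simp [fL, fA])

theorem merge_helper (d' : List Letter) (hd' : NormalWord d') (ℓ m : Letter)
    (hjd : ∀ x ∈ d'.getLast?, AltPair x ℓ) (hmty : tyA m = false)
    (y : Letter) (t₂ : List Letter) (ht : NormalWord (y :: t₂)) (hyty : tyA y = false)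
    (hnm : NormalWord (m :: t₂))
    (hstep : φ ℓ.toG ⟨y :: t₂, ht⟩ = ⟨m :: t₂, hnm⟩) :
    ∃ ii M jj, ii ≤ (d' ++ [ℓ]).length ∧ M.length ≤ 1 ∧ jj ≤ (d' ++ [ℓ]).length + 1 ∧
      jj ≤ (y :: t₂).length ∧ (d' ++ [ℓ]).length + M.length ≤ jj + ii + 1 ∧
      (φ (evalWord (d' ++ [ℓ])) ⟨y :: t₂, ht⟩).1 =
        (d' ++ [ℓ]).take ii ++ M ++ (y :: t₂).drop jj := by
  have hfl := congrArg Subtype.val hstep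
  rw [φ_letter] at hfl
  have hlty : tyA ℓ = false := hlty_aux hyty hfl
  have hnw : NormalWord (d' ++ (m :: t₂)) := by
    refine normal_append hd' hnm ?_
    intro x hx z hz
    simp at hz; subst hz
    have := hjd x hx
    rw [altPair_iff] at this ⊢
    rw [hmty]; rw [hlty] at this; exact this
  refine ⟨d'.length, [m], 1, by simp, by simp, by simp, by simp, by simp, ?_⟩
  rw [φ_eval_concat, hstep, prep_clean d' _ hnm hnw, List.take_append_of_le_length (le_refl _),
    List.take_length]
  simp

theorem prep_decomp : ∀ (d : List Letter), NormalWord d → ∀ (t : List Letter) (ht : NormalWord t),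
    ∃ ii M jj, ii ≤ d.length ∧ M.length ≤ 1 ∧ jj ≤ d.length + 1 ∧ jj ≤ t.length ∧
      d.length + M.length ≤ jj + ii + 1 ∧
      (φ (evalWord d) ⟨t, ht⟩).1 = d.take ii ++ M ++ t.drop jj := by
  intro d
  induction d using List.reverseRecOn with
  | nil =>
    intro _ t ht
    refine ⟨0, [], 0, by simp, by simp, by simp, by simp, by simp, ?_⟩
    rw [evalWord_nil, map_one]; rfl
  | append_singleton d' ℓ ih =>
    intro hd t ht
    have hd' : NormalWord d' := normal_of_append_left hd
    have hjd : ∀ x ∈ d'.getLast?, AltPair x ℓ := by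
      intro x hx
      exact (List.isChain_append.1 hd).2.2 x hx ℓ rfl
    -- clean prepending case, shared proof
    have cleanCase : (∀ y ∈ t.head?, AltPair ℓ y) →
        ∃ ii M jj, ii ≤ (d' ++ [ℓ]).length ∧ M.length ≤ 1 ∧ jj ≤ (d' ++ [ℓ]).length + 1 ∧
          jj ≤ t.length ∧ (d' ++ [ℓ]).length + M.length ≤ jj + ii + 1 ∧
          (φ (evalWord (d' ++ [ℓ])) ⟨t, ht⟩).1 = (d' ++ [ℓ]).take ii ++ M ++ t.drop jj := by
      intro hclean
      refine ⟨(d' ++ [ℓ]).length, [], 0, le_refl _, by simp, by simp, by simp, by simp, ?_⟩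
      have hnw : NormalWord (d' ++ [ℓ] ++ t) := by
        refine normal_append hd ht ?_
        intro x hx y hy
        rw [List.getLast?_concat] at hx
        simp at hx; subst hx
        exact hclean y hy
      rw [prep_clean _ t ht hnw, List.take_length, List.drop_zero, List.append_nil]
    match t, ht with
    | [], ht => exact cleanCase (by simp)
    | y :: t₂, ht =>
      by_cases hcl : AltPair ℓ y
      · exact cleanCase (by intro z hz; simp at hz; subst hz; exact hcl)
      · have hsame : tyA ℓ = tyA y := by rwa [altPair_iff, not_ne_iff] at hcl
        clear cleanCase hcl hd
        match ℓ, y, ht, hjd, hsame with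
        | .A, .A, ht, _, _ =>
          exact cancel_helper d' .A (ih hd') .A t₂ ht (normal_tail ht)
            (Subtype.ext (by rw [φ_letter]; rfl))
        | .B, .Binv, ht, _, _ =>
          exact cancel_helper d' .B (ih hd') .Binv t₂ ht (normal_tail ht)
            (Subtype.ext (by rw [φ_letter]; rfl))
        | .Binv, .B, ht, _, _ =>
          exact cancel_helper d' .Binv (ih hd') .B t₂ ht (normal_tail ht)
            (Subtype.ext (by rw [φ_letter]; rfl))
        | .B, .B, ht, hjd, _ =>
          have hnm : NormalWord (Letter.Binv :: t₂) := by
            refine normal_cons (normal_tail ht) ?_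
            intro z hz
            have hz' := normal_head ht z hz
            rw [altPair_iff] at hz' ⊢
            simpa [tyA] using hz'
          exact merge_helper d' hd' .B .Binv hjd rfl .B t₂ ht rfl hnm
            (Subtype.ext (by rw [φ_letter]; rfl))
        | .Binv, .Binv, ht, hjd, _ =>
          have hnm : NormalWord (Letter.B :: t₂) := by
            refine normal_cons (normal_tail ht) ?_
            intro z hz
            have hz' := normal_head ht z hz
            rw [altPair_iff] at hz' ⊢
            simpa [tyA] using hz'
          have hstep : φ (Letter.Binv).toG ⟨Letter.Binv :: t₂, ht⟩ = ⟨Letter.B :: t₂, hnm⟩ := by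
            apply Subtype.ext
            rw [φ_letter]
            show fB (fB (Letter.Binv :: t₂)) = Letter.B :: t₂
            have hh := normal_head ht
            match t₂, hh with
            | [], _ => rfl
            | .A :: s, _ => rfl
            | .B :: s, hh => exact absurd (hh .B rfl) (by simp [AltPair])
            | .Binv :: s, hh => exact absurd (hh .Binv rfl) (by simp [AltPair])
          exact merge_helper d' hd' .Binv .B hjd rfl .Binv t₂ ht rfl hnm hstep

/- ====================  powers of a cyclically reduced word  ==================== -/

/-- concatenated power of a word -/
def cpow : ℕ → List Letter → List Letter
  | 0, _ => []
  | n + 1, c => c ++ cpow n c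

theorem eval_cpow (n : ℕ) (c : List Letter) : evalWord (cpow n c) = evalWord c ^ n := by
  induction n with
  | zero => simp [cpow]
  | succ n ih => rw [cpow, evalWord_append, ih, pow_succ']

theorem length_cpow (n : ℕ) (c : List Letter) : (cpow n c).length = n * c.length := by
  induction n with
  | zero => simp [cpow]
  | succ n ih => simp [cpow, ih]; ring

theorem head?_cons_append {z : Letter} {c0 X : List Letter} :
    ((z :: c0) ++ X).head? = some z := rfl

theorem norm_cpow_app {c t' : List Letter} (hc : NormalWord c)
    (hcyc : ∀ x ∈ c.getLast?, ∀ y ∈ c.head?, AltPair x y)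
    (hgt : NormalWord (c ++ t')) : ∀ k, NormalWord (cpow k c ++ t') := by
  intro k
  induction k with
  | zero => exact normal_of_append_right hgt
  | succ k ih =>
    show NormalWord (c ++ cpow k c ++ t')
    rw [List.append_assoc]
    refine normal_append hc ih ?_
    intro x hx y hy
    cases k with
    | zero => exact (List.isChain_append.1 hgt).2.2 x hx y hy
    | succ k =>
      show AltPair x y
      cases c with
      | nil => simp at hx
      | cons z c0 =>
        rw [show cpow (k+1) (z :: c0) ++ t' = (z :: c0) ++ (cpow k (z :: c0) ++ t') by
          simp [cpow], head?_cons_append] at hy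
        simp at hy; subst hy
        exact hcyc x hx z rfl

theorem goodpow {c t' : List Letter} (hc : NormalWord c)
    (hcyc : ∀ x ∈ c.getLast?, ∀ y ∈ c.head?, AltPair x y)
    (hgt : NormalWord (c ++ t')) (ht' : NormalWord t') :
    ∀ k, (φ (evalWord c ^ k) ⟨t', ht'⟩).1 = cpow k c ++ t' := by
  intro k
  induction k with
  | zero => rw [pow_zero, map_one]; rfl
  | succ k ih =>
    rw [pow_succ', φ_mul,
      show φ (evalWord c ^ k) ⟨t', ht'⟩ = ⟨cpow k c ++ t', norm_cpow_app hc hcyc hgt k⟩ from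
        Subtype.ext ih]
    have hnw : NormalWord (c ++ (cpow k c ++ t')) := by
      have := norm_cpow_app hc hcyc hgt (k + 1)
      rwa [show cpow (k+1) c ++ t' = c ++ (cpow k c ++ t') by simp [cpow]] at this
    rw [prep_clean c _ _ hnw]
    simp [cpow]

theorem stab (c : List Letter) (hc : NormalWord c) (hlen : 2 ≤ c.length)
    (hcyc : ∀ x ∈ c.getLast?, ∀ y ∈ c.head?, AltPair x y) :
    ∀ t : NW, ∃ m t', ∃ ht' : NormalWord t', NormalWord (c ++ t') ∧
      ∀ k, (φ (evalWord c ^ (m + k)) t).1 = cpow k c ++ t' := by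
  intro t
  generalize hn : t.1.length = n
  induction n using Nat.strong_induction_on generalizing t with
  | _ n ih =>
    by_cases hg : NormalWord (c ++ t.1)
    · refine ⟨0, t.1, t.2, hg, ?_⟩
      intro k
      rw [zero_add]
      exact goodpow hc hcyc hg t.2 k
    · obtain ⟨ii, M, jj, b1, b2, b3, b4, b5, heq⟩ := prep_decomp c hc t.1 t.2
      set t₁ : NW := φ (evalWord c) t with ht₁def
      have heq' : t₁.1 = List.take ii c ++ M ++ List.drop jj t.1 := heq
      rcases Nat.eq_zero_or_pos ii with hii | hii
      · -- all of c was consumed: the word got strictly shorter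
        have hlt : t₁.1.length < n := by
          rw [heq', hii]
          simp [List.length_drop]
          omega
        obtain ⟨m', t', ht', hgood, hall⟩ := ih t₁.1.length hlt t₁ rfl
        refine ⟨m' + 1, t', ht', hgood, ?_⟩
        intro k
        have : evalWord c ^ (m' + 1 + k) = evalWord c ^ (m' + k) * evalWord c := by
          rw [← pow_succ]; ring_nf
        rw [this, φ_mul, ← ht₁def]
        exact hall k
      · -- part of c survives: good junction reached
        have hgood1 : NormalWord (c ++ t₁.1) := by
          refine normal_append hc t₁.2 ?_
          intro x hx y hy
          rw [heq'] at hy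
          cases c with
          | nil => simp at hlen
          | cons z c0 =>
            have : ii - 1 + 1 = ii := by omega
            rw [show List.take ii (z :: c0) = z :: List.take (ii - 1) c0 by
              rw [← this]; rfl] at hy
            rw [show z :: List.take (ii-1) c0 ++ M ++ List.drop jj t.1
              = z :: (List.take (ii-1) c0 ++ M ++ List.drop jj t.1) by simp] at hy
            simp at hy; subst hy
            exact hcyc x hx z rfl
        refine ⟨1, t₁.1, t₁.2, hgood1, ?_⟩
        intro k
        have : evalWord c ^ (1 + k) = evalWord c ^ k * evalWord c := by
          rw [← pow_succ]; ring_nf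
        rw [this, φ_mul, ← ht₁def,
          show t₁ = ⟨t₁.1, t₁.2⟩ from rfl]
        exact goodpow hc hcyc hgood1 t₁.2 k

/- ====================  cyclic reduction  ==================== -/

theorem a_inv : gen_a⁻¹ = gen_a := inv_eq_of_mul_eq_one_right a_mul_a

theorem conjA {E C : PSL2Z} :
    gen_a * (E * C * E⁻¹ * gen_a) = (gen_a * E) * C * (gen_a * E)⁻¹ := by
  rw [mul_inv_rev, a_inv]; group

theorem conjBB {E C : PSL2Z} :
    gen_b * (E * C * E⁻¹ * gen_b * gen_b) = (gen_b * E) * C * (gen_b * E)⁻¹ := by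
  have h : E * C * E⁻¹ * gen_b * gen_b = E * C * E⁻¹ * (gen_b * gen_b) := by group
  rw [h, b_mul_b, mul_inv_rev]; group

theorem conjBinvBinv {E C : PSL2Z} :
    gen_b⁻¹ * (E * C * E⁻¹ * gen_b⁻¹ * gen_b⁻¹) = (gen_b⁻¹ * E) * C * (gen_b⁻¹ * E)⁻¹ := by
  have h : E * C * E⁻¹ * gen_b⁻¹ * gen_b⁻¹ = E * C * E⁻¹ * (gen_b⁻¹ * gen_b⁻¹) := by group
  rw [h, binv_mul_binv, mul_inv_rev]; group

theorem eval_sandwich (x y : Letter) (m : List Letter) :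
    evalWord (x :: (m ++ [y])) = x.toG * (evalWord m * y.toG) := by
  rw [evalWord_cons, evalWord_append, evalWord_singleton]

/-- cyclic-reduction data for the output word -/
def CycOut (c : List Letter) : Prop :=
  c.length ≤ 1 ∨ (2 ≤ c.length ∧ ∀ x ∈ c.getLast?, ∀ y ∈ c.head?, AltPair x y)

theorem cycred : ∀ (w : List Letter), NormalWord w →
    ∃ E c, NormalWord c ∧ evalWord w = E * evalWord c * E⁻¹ ∧ CycOut c := by
  intro w
  generalize hn : w.length = n
  induction n using Nat.strong_induction_on generalizing w with
  | _ n ih =>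
    intro hw
    by_cases hl : w.length ≤ 1
    · exact ⟨1, w, hw, by simp, Or.inl hl⟩
    · push_neg at hl
      match w, hw, hl, hn with
      | ℓ₀ :: t, hw, hl, hn =>
      rcases List.eq_nil_or_concat t with rfl | ⟨mid, ℓ₁, hcat⟩
      · simp at hl
      · rw [List.concat_eq_append] at hcat
        subst hcat
        have hmid : NormalWord mid := normal_of_append_left (normal_tail hw)
        have hjmid : ∀ x ∈ mid.getLast?, AltPair x ℓ₁ := fun x hx =>
          (List.isChain_append.1 (normal_tail hw)).2.2 x hx ℓ₁ rfl
        by_cases hcp : AltPair ℓ₁ ℓ₀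
        · refine ⟨1, ℓ₀ :: (mid ++ [ℓ₁]), hw, by simp, Or.inr ⟨by simpa using hl, ?_⟩⟩
          intro x hx y hy
          rw [show ℓ₀ :: (mid ++ [ℓ₁]) = (ℓ₀ :: mid) ++ [ℓ₁] by simp,
            List.getLast?_concat] at hx
          simp at hx hy
          subst hx; subst hy
          exact hcp
        · have hsame : tyA ℓ₁ = tyA ℓ₀ := by rwa [altPair_iff, not_ne_iff] at hcp
          clear hcp hw hl
          match ℓ₀, ℓ₁, hjmid, hsame, hn with
          | .A, .B, _, hs, _ => exact absurd hs (by simp [tyA])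
          | .A, .Binv, _, hs, _ => exact absurd hs (by simp [tyA])
          | .B, .A, _, hs, _ => exact absurd hs (by simp [tyA])
          | .Binv, .A, _, hs, _ => exact absurd hs (by simp [tyA])
          | .A, .A, hjmid, _, hn =>
            obtain ⟨E', c, hcn, hev, hcc⟩ := ih mid.length (by simp at hn; omega) mid rfl hmid
            refine ⟨gen_a * E', c, hcn, ?_, hcc⟩
            rw [eval_sandwich, hev]
            exact conjA
          | .B, .Binv, hjmid, _, hn =>
            obtain ⟨E', c, hcn, hev, hcc⟩ := ih mid.length (by simp at hn; omega) mid rfl hmid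
            refine ⟨gen_b * E', c, hcn, ?_, hcc⟩
            rw [eval_sandwich, hev]
            show gen_b * (E' * evalWord c * E'⁻¹ * gen_b⁻¹) = _
            rw [mul_inv_rev]; group
          | .Binv, .B, hjmid, _, hn =>
            obtain ⟨E', c, hcn, hev, hcc⟩ := ih mid.length (by simp at hn; omega) mid rfl hmid
            refine ⟨gen_b⁻¹ * E', c, hcn, ?_, hcc⟩
            rw [eval_sandwich, hev]
            show gen_b⁻¹ * (E' * evalWord c * E'⁻¹ * gen_b) = _
            rw [mul_inv_rev]; group
          | .B, .B, hjmid, _, hn =>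
            have hmid' : NormalWord (mid ++ [Letter.Binv]) := by
              refine normal_append hmid (List.isChain_singleton _) ?_
              intro x hx y hy
              simp at hy; subst hy
              have := hjmid x hx
              rw [altPair_iff] at this ⊢
              simpa [tyA] using this
            obtain ⟨E', c, hcn, hev, hcc⟩ :=
              ih (mid.length + 1) (by simp at hn; omega) (mid ++ [Letter.Binv]) (by simp) hmid'
            refine ⟨gen_b * E', c, hcn, ?_, hcc⟩
            have hm : evalWord mid = E' * evalWord c * E'⁻¹ * gen_b := by
              rw [evalWord_append, evalWord_singleton] at hev
              have : evalWord mid = evalWord mid * gen_b⁻¹ * gen_b := by group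
              rw [this, show evalWord mid * gen_b⁻¹ = evalWord mid * (Letter.Binv).toG from rfl, hev]
            rw [eval_sandwich, hm]
            show gen_b * (E' * evalWord c * E'⁻¹ * gen_b * gen_b) = _
            exact conjBB
          | .Binv, .Binv, hjmid, _, hn =>
            have hmid' : NormalWord (mid ++ [Letter.B]) := by
              refine normal_append hmid (List.isChain_singleton _) ?_
              intro x hx y hy
              simp at hy; subst hy
              have := hjmid x hx
              rw [altPair_iff] at this ⊢
              simpa [tyA] using this
            obtain ⟨E', c, hcn, hev, hcc⟩ :=
              ih (mid.length + 1) (by simp at hn; omega) (mid ++ [Letter.B]) (by simp) hmid'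
            refine ⟨gen_b⁻¹ * E', c, hcn, ?_, hcc⟩
            have hm : evalWord mid = E' * evalWord c * E'⁻¹ * gen_b⁻¹ := by
              rw [evalWord_append, evalWord_singleton] at hev
              have : evalWord mid = evalWord mid * gen_b * gen_b⁻¹ := by group
              rw [this, show evalWord mid * gen_b = evalWord mid * (Letter.B).toG from rfl, hev]
            rw [eval_sandwich, hm]
            show gen_b⁻¹ * (E' * evalWord c * E'⁻¹ * gen_b⁻¹ * gen_b⁻¹) = _
            exact conjBinvBinv

/- ====================  torsion elements  ==================== -/

theorem infinite_order_of_cyc {c : List Letter} (hc : NormalWord c) (hlen : 2 ≤ c.length)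
    (hcyc : ∀ x ∈ c.getLast?, ∀ y ∈ c.head?, AltPair x y) : ¬ IsOfFinOrder (evalWord c) := by
  intro h
  obtain ⟨n, hn, hpow⟩ := isOfFinOrder_iff_pow_eq_one.1 h
  have h1 : NormalWord (cpow n c) := by
    have := norm_cpow_app hc hcyc (t' := []) (by simpa using hc) n
    simpa using this
  have h2 : evalWord (cpow n c) = evalWord ([] : List Letter) := by
    rw [eval_cpow, hpow, evalWord_nil]
  have := eval_injective h1 List.isChain_nil h2
  have := congrArg List.length this
  rw [length_cpow] at this
  simp at this
  rcases this with h | h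
  · omega
  · rw [h] at hlen; simp at hlen

theorem conj_pow' (E x : PSL2Z) (n : ℕ) : (E * x * E⁻¹) ^ n = E * x ^ n * E⁻¹ := by
  induction n with
  | zero => simp
  | succ n ih => rw [pow_succ, pow_succ, ih]; group

theorem conj_finorder {E x : PSL2Z} (h : IsOfFinOrder x) : IsOfFinOrder (E * x * E⁻¹) := by
  obtain ⟨n, hn, hpow⟩ := isOfFinOrder_iff_pow_eq_one.1 h
  exact isOfFinOrder_iff_pow_eq_one.2 ⟨n, hn, by rw [conj_pow', hpow]; group⟩

theorem conj_finorder_iff (E x : PSL2Z) : IsOfFinOrder (E * x * E⁻¹) ↔ IsOfFinOrder x := by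
  constructor
  · intro h
    have := conj_finorder (E := E⁻¹) h
    simpa [mul_assoc] using this
  · exact conj_finorder

theorem finorder_letter (ℓ : Letter) : IsOfFinOrder (Letter.toG ℓ) := by
  cases ℓ
  · exact isOfFinOrder_iff_pow_eq_one.2 ⟨2, by norm_num, rel_a⟩
  · exact isOfFinOrder_iff_pow_eq_one.2 ⟨3, by norm_num, rel_b⟩
  · exact (isOfFinOrder_iff_pow_eq_one.2 ⟨3, by norm_num, rel_b⟩ : IsOfFinOrder gen_b).inv

theorem torsion_decomp {g : PSL2Z} (hfin : IsOfFinOrder g) :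
    g = 1 ∨ ∃ E ℓ, g = E * Letter.toG ℓ * E⁻¹ := by
  obtain ⟨E, c, hcn, hev, hcyc⟩ := cycred (nf g) (nf_normal g)
  rw [eval_nf] at hev
  rcases hcyc with hsmall | ⟨hlen, hj⟩
  · match c, hsmall with
    | [], _ => left; rw [hev]; simp
    | [ℓ], _ =>
      right
      exact ⟨E, ℓ, by rw [hev, evalWord_singleton]⟩
  · exfalso
    exact infinite_order_of_cyc hcn hlen hj (by
      rw [← conj_finorder_iff E, ← hev]; exact hfin)

/- ====================  elliptic elements with distinct fixed vertices  ==================== -/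

/-- the finite factor corresponding to a letter -/
def fac (ℓ : Letter) : Set PSL2Z :=
  if tyA ℓ then {1, gen_a} else {1, gen_b, gen_b⁻¹}

theorem fac_congr {ℓ ℓ' : Letter} (h : tyA ℓ = tyA ℓ') : fac ℓ = fac ℓ' := by
  unfold fac; rw [h]

theorem one_mem_fac (ℓ : Letter) : 1 ∈ fac ℓ := by
  unfold fac; split <;> simp

theorem toG_mem_fac (ℓ : Letter) : ℓ.toG ∈ fac ℓ := by
  cases ℓ <;> simp [fac, tyA, Letter.toG]

theorem fac_mul_mem {ℓ : Letter} {x y : PSL2Z} (hx : x ∈ fac ℓ) (hy : y ∈ fac ℓ) :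
    x * y ∈ fac ℓ := by
  unfold fac at *
  split at hx <;> rename_i hty
  · rw [if_pos hty] at hy ⊢
    rcases hx with rfl | rfl <;> rcases hy with rfl | rfl <;>
      simp [a_mul_a]
  · rw [if_neg hty] at hy ⊢
    rcases hx with rfl | rfl | rfl <;> rcases hy with rfl | rfl | rfl <;>
      simp [b_mul_b, binv_mul_binv]

theorem fac_comm {ℓ : Letter} {x y : PSL2Z} (hx : x ∈ fac ℓ) (hy : y ∈ fac ℓ) :
    x * y = y * x := by
  unfold fac at *
  split at hx
  · rw [if_pos (by assumption)] at hy
    rcases hx with rfl | rfl <;> rcases hy with rfl | rfl <;> group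
  · rw [if_neg (by assumption)] at hy
    rcases hx with rfl | rfl | rfl <;> rcases hy with rfl | rfl | rfl <;> group

/- formal inverse of a word -/
def linv : Letter → Letter
  | .A => .A
  | .B => .Binv
  | .Binv => .B

def winv (w : List Letter) : List Letter := w.reverse.map linv

theorem tyA_linv (ℓ : Letter) : tyA (linv ℓ) = tyA ℓ := by cases ℓ <;> rfl

theorem toG_linv (ℓ : Letter) : (linv ℓ).toG = ℓ.toG⁻¹ := by
  cases ℓ
  · exact a_inv.symm
  · rfl
  · exact (inv_inv gen_b).symm

theorem eval_winv (w : List Letter) : evalWord (winv w) = (evalWord w)⁻¹ := by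
  induction w with
  | nil => simp [winv]
  | cons ℓ t ih =>
    rw [show winv (ℓ :: t) = winv t ++ [linv ℓ] by simp [winv], evalWord_append,
      evalWord_singleton, ih, toG_linv, evalWord_cons, mul_inv_rev]

theorem normal_winv {w : List Letter} (h : NormalWord w) : NormalWord (winv w) := by
  unfold winv NormalWord
  show List.IsChain AltPair (List.map linv w.reverse)
  rw [List.isChain_map, List.isChain_reverse]
  refine List.IsChain.imp ?_ h
  intro a b hab
  show AltPair (linv b) (linv a)
  rw [altPair_iff, tyA_linv, tyA_linv]
  rw [altPair_iff] at hab
  exact hab.symm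

theorem head?_winv (w : List Letter) : (winv w).head? = w.getLast?.map linv := by
  rw [winv, List.head?_map, List.head?_reverse]

theorem getLast?_winv (w : List Letter) : (winv w).getLast? = w.head?.map linv := by
  rw [winv, List.getLast?_map, List.getLast?_reverse]

theorem lemV : ∀ (w : List Letter), NormalWord w → ∀ (α β : Letter),
    ¬(tyA α = tyA β ∧ evalWord w ∈ fac α) →
    ∃ E c, NormalWord c ∧ 2 ≤ c.length ∧
      (∀ x ∈ c.getLast?, ∀ y ∈ c.head?, AltPair x y) ∧
      α.toG * evalWord w * β.toG * (evalWord w)⁻¹ = E * evalWord c * E⁻¹ := by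
  intro w
  generalize hn : w.length = n
  induction n using Nat.strong_induction_on generalizing w with
  | _ n ih =>
    intro hw α β hside
    match w, hw, hn with
    | [], _, hn =>
      -- base: w is empty
      have hty : tyA α ≠ tyA β := fun h => hside ⟨h, by simp [one_mem_fac]⟩
      refine ⟨1, [α, β], ?_, by simp, ?_, ?_⟩
      · exact List.isChain_cons_cons.2 ⟨(altPair_iff _ _).2 hty, List.isChain_singleton _⟩
      · intro x hx y hy
        simp at hx hy
        subst hx; subst hy
        exact (altPair_iff _ _).2 (Ne.symm hty)
      · simp [evalWord_cons, evalWord_singleton, mul_assoc]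
    | ℓ₀ :: w', hw, hn =>
      by_cases hfront : tyA ℓ₀ = tyA α
      · -- strip the first letter
        have hw' : NormalWord w' := normal_tail hw
        have hside' : ¬(tyA α = tyA β ∧ evalWord w' ∈ fac α) := by
          rintro ⟨h1, h2⟩
          refine hside ⟨h1, ?_⟩
          rw [evalWord_cons]
          exact fac_mul_mem
            (by rw [fac_congr (show tyA α = tyA ℓ₀ from hfront.symm)]; exact toG_mem_fac ℓ₀) h2
        obtain ⟨E', c, hcn, hclen, hccyc, hev⟩ :=
          ih w'.length (by simp at hn; omega) w' rfl hw' α β hside'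
        refine ⟨ℓ₀.toG * E', c, hcn, hclen, hccyc, ?_⟩
        have hcomm : α.toG * ℓ₀.toG = ℓ₀.toG * α.toG :=
          fac_comm (toG_mem_fac α) (by rw [← fac_congr hfront]; exact toG_mem_fac ℓ₀)
        have key : α.toG * evalWord (ℓ₀ :: w') * β.toG * (evalWord (ℓ₀ :: w'))⁻¹
            = ℓ₀.toG * (α.toG * evalWord w' * β.toG * (evalWord w')⁻¹) * ℓ₀.toG⁻¹ := by
          rw [evalWord_cons, mul_inv_rev,
            show α.toG * (ℓ₀.toG * evalWord w') = ℓ₀.toG * α.toG * evalWord w' by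
              rw [← mul_assoc, hcomm]]
          group
        rw [key, hev, mul_inv_rev]
        group
      · -- first letter survives; look at the last letter
        rcases List.eq_nil_or_concat (ℓ₀ :: w') with habs | ⟨w'', ℓ₁, hcat⟩
        · simp at habs
        · rw [List.concat_eq_append] at hcat
          by_cases hback : tyA ℓ₁ = tyA β
          · -- strip the last letter
            have hw'' : NormalWord w'' := by
              rw [hcat] at hw
              exact normal_of_append_left hw
            have hside'' : ¬(tyA α = tyA β ∧ evalWord w'' ∈ fac α) := by
              rintro ⟨h1, h2⟩
              refine hside ⟨h1, ?_⟩
              rw [hcat, evalWord_append, evalWord_singleton]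
              exact fac_mul_mem h2
                (by rw [← fac_congr (show tyA ℓ₁ = tyA α from by rw [hback, ← h1])]
                    exact toG_mem_fac ℓ₁)
            obtain ⟨E', c, hcn, hclen, hccyc, hev⟩ :=
              ih w''.length (by rw [hcat] at hn; simp at hn; omega) w'' rfl hw'' α β hside''
            refine ⟨E', c, hcn, hclen, hccyc, ?_⟩
            have hcomm : β.toG * ℓ₁.toG = ℓ₁.toG * β.toG :=
              fac_comm (toG_mem_fac β) (by rw [← fac_congr hback]; exact toG_mem_fac ℓ₁)
            have key : α.toG * evalWord (ℓ₀ :: w') * β.toG * (evalWord (ℓ₀ :: w'))⁻¹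
                = α.toG * evalWord w'' * (ℓ₁.toG * β.toG * ℓ₁.toG⁻¹) * (evalWord w'')⁻¹ := by
              rw [hcat, evalWord_append, evalWord_singleton, mul_inv_rev]
              group
            have h3 : ℓ₁.toG * β.toG * ℓ₁.toG⁻¹ = β.toG := by
              rw [← hcomm]; group
            rw [key, h3, hev]
          · -- both ends survive: build the cyclically reduced word directly
            have hwin : NormalWord (winv (ℓ₀ :: w')) := normal_winv hw
            have hhead : (ℓ₀ :: w').head? = some ℓ₀ := rfl
            have hlast : (ℓ₀ :: w').getLast? = some ℓ₁ := by
              rw [hcat]; exact List.getLast?_concat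
            refine ⟨1, α :: ((ℓ₀ :: w') ++ β :: winv (ℓ₀ :: w')), ?_, by simp, ?_, ?_⟩
            · -- normality
              refine normal_cons ?_ ?_
              · refine normal_append hw ?_ ?_
                · refine normal_cons hwin ?_
                  intro y hy
                  rw [head?_winv, hlast] at hy
                  simp at hy; subst hy
                  rw [altPair_iff, tyA_linv]
                  exact fun h => hback h.symm
                · intro x hx y hy
                  rw [hlast] at hx
                  simp at hx hy
                  subst hx; subst hy
                  rw [altPair_iff]
                  exact fun h => hback h
              · intro y hy
                simp at hy; subst hy
                rw [altPair_iff]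
                exact fun h => hfront h.symm
            · -- cyclic junction
              intro x hx y hy
              have hwin_ne : winv (ℓ₀ :: w') ≠ [] := by
                intro hwn
                have := congrArg List.length hwn
                simp [winv] at this
              have hg : (α :: ((ℓ₀ :: w') ++ β :: winv (ℓ₀ :: w'))).getLast?
                  = (winv (ℓ₀ :: w')).getLast? := by
                rw [show α :: ((ℓ₀ :: w') ++ β :: winv (ℓ₀ :: w'))
                  = (α :: (ℓ₀ :: w') ++ [β]) ++ winv (ℓ₀ :: w') by simp]
                exact List.getLast?_append_of_ne_nil _ hwin_ne
              rw [hg, getLast?_winv, hhead] at hx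
              have hxv : x = linv ℓ₀ := by simpa using hx.symm
              have hyv : y = α := by simpa using hy.symm
              subst hxv; subst hyv
              rw [altPair_iff, tyA_linv]
              exact fun h => hfront h
            · -- evaluation
              simp only [evalWord_cons, evalWord_append, eval_winv, mul_inv_rev, one_mul, inv_one,
                mul_one, mul_assoc]

/- ====================  infinite multiplicative sets contain non-torsion elements  ============ -/

theorem exists_nontorsion (S : Set PSL2Z) (hmul : ∀ x ∈ S, ∀ y ∈ S, x * y ∈ S)
    (hinf : S.Infinite) : ∃ g ∈ S, ¬ IsOfFinOrder g := by
  by_contra hcon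
  push_neg at hcon
  -- pick a nontrivial element
  obtain ⟨s₀, hs₀S, hs₀ne⟩ : ∃ s₀ ∈ S, s₀ ≠ 1 := by
    by_contra hall
    push_neg at hall
    exact hinf (Set.Finite.subset (Set.finite_singleton 1) (fun x hx => hall x hx))
  rcases torsion_decomp (hcon s₀ hs₀S) with h1 | ⟨E₀, α₀, hdec⟩
  · exact hs₀ne h1
  refine hinf (Set.Finite.subset
    (Set.Finite.insert 1 (Set.Finite.insert (E₀ * gen_a * E₀⁻¹)
      (Set.Finite.insert (E₀ * gen_b * E₀⁻¹) (Set.finite_singleton (E₀ * gen_b⁻¹ * E₀⁻¹)))))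
    ?_)
  intro t htS
  by_cases ht1 : t = 1
  · subst ht1; left; rfl
  rcases torsion_decomp (hcon t htS) with h1 | ⟨F, β, hdecF⟩
  · exact absurd h1 ht1
  -- the two elliptic elements must share their fixed vertex
  have hsame : tyA α₀ = tyA β ∧ E₀⁻¹ * F ∈ fac α₀ := by
    by_contra hside
    have hwn := nf_normal (E₀⁻¹ * F)
    have hW : evalWord (nf (E₀⁻¹ * F)) = E₀⁻¹ * F := eval_nf _
    obtain ⟨E, c, hcn, hclen, hccyc, hev⟩ := lemV (nf (E₀⁻¹ * F)) hwn α₀ β (by rwa [hW])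
    have hio : ¬ IsOfFinOrder (α₀.toG * (E₀⁻¹ * F) * β.toG * (E₀⁻¹ * F)⁻¹) := by
      rw [← hW, hev, conj_finorder_iff]
      exact infinite_order_of_cyc hcn hclen hccyc
    have hst : s₀ * t = E₀ * (α₀.toG * (E₀⁻¹ * F) * β.toG * (E₀⁻¹ * F)⁻¹) * E₀⁻¹ := by
      rw [hdec, hdecF]; group
    have : IsOfFinOrder (s₀ * t) := hcon _ (hmul s₀ hs₀S t htS)
    rw [hst, conj_finorder_iff] at this
    exact hio this
  -- hence t is conjugate to a generator by E₀
  have htE : t = E₀ * β.toG * E₀⁻¹ := by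
    have hF : F = E₀ * (E₀⁻¹ * F) := by group
    have hcomm : (E₀⁻¹ * F) * β.toG = β.toG * (E₀⁻¹ * F) :=
      fac_comm hsame.2 (by rw [fac_congr hsame.1]; exact toG_mem_fac β)
    rw [hdecF]
    rw [show F * β.toG * F⁻¹ = E₀ * ((E₀⁻¹ * F) * β.toG * (E₀⁻¹ * F)⁻¹) * E₀⁻¹ by group,
      hcomm]
    group
  cases β
  · right; left; exact htE
  · right; right; left; exact htE
  · right; right; right; exact htE

/-- `w` is a geodesic representative of `g`. -/
def Geodesic (w : List Letter) (g : PSL2Z) : Prop :=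
  evalWord w = g ∧ ∀ w' : List Letter, evalWord w' = g → w.length ≤ w'.length

/-- A cyclically reduced word: a normal form of length 1, or starting with `a`
and ending in `{b, b⁻¹}`, or starting in `{b, b⁻¹}` and ending with `a`. -/
def CyclicallyReducedWord (w : List Letter) : Prop :=
  NormalWord w ∧ (w.length = 1 ∨
    ∃ x y, w.head? = some x ∧ w.getLast? = some y ∧
      ((x = .A ∧ y ≠ .A) ∨ (x ≠ .A ∧ y = .A)))

/-- The right-coset equivalence: `x ≈ y` iff `x y⁻¹ ∈ H` (so `Hx = Hy`). -/
def cosetSetoid (H : Subgroup PSL2Z) : Setoid PSL2Z where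
  r x y := x * y⁻¹ ∈ H
  iseqv := by
    refine ⟨fun x => by simpa using H.one_mem, fun {x y} h => ?_, fun {x y z} hxy hyz => ?_⟩
    · simpa [mul_inv_rev] using H.inv_mem h
    · simpa [mul_assoc] using H.mul_mem hxy hyz

/-- The vertex set of the Schreier graph of `H`: right cosets of `H`. -/
def Coset (H : Subgroup PSL2Z) : Type := Quotient (cosetSetoid H)

/-- The base vertex `H·1` of the Schreier graph. -/
def base (H : Subgroup PSL2Z) : Coset H := Quotient.mk (cosetSetoid H) 1

/-- Reading a letter from a vertex of the Schreier graph: `Hg ↦ Hgℓ`. -/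
def step {H : Subgroup PSL2Z} (v : Coset H) (ℓ : Letter) : Coset H :=
  Quotient.map (fun g => g * ℓ.toG)
    (fun x y hxy => by
      change x * y⁻¹ ∈ H at hxy
      change x * ℓ.toG * (y * ℓ.toG)⁻¹ ∈ H
      simpa [mul_inv_rev, mul_assoc] using hxy) v

/-- Reading a word from a vertex of the Schreier graph. -/
def readW {H : Subgroup PSL2Z} (v : Coset H) (w : List Letter) : Coset H :=
  w.foldl step v

/-- Some geodesic (normal-form) cycle at the base vertex reads letter `m`
from the vertex `u`. -/
def edgeOkAux (H : Subgroup PSL2Z) (u : Coset H) (m : Letter) : Prop :=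
  ∃ w p q : List Letter, NormalWord w ∧ evalWord w ∈ H ∧
    w = p ++ m :: q ∧ readW (base H) p = u

/-- Traversing letter `ℓ` from `v` uses an edge of the Stallings graph `Γ(H)`
(the subgraph of the Schreier graph spanned by the geodesic cycles at the base
vertex); `a`-edges and `b`-edges may be traversed in either direction. -/
def edgeOk (H : Subgroup PSL2Z) (v : Coset H) : Letter → Prop
  | .A => edgeOkAux H v .A ∨ edgeOkAux H (step v .A) .A
  | .B => edgeOkAux H v .B ∨ edgeOkAux H (step v .B) .Binv
  | .Binv => edgeOkAux H v .Binv ∨ edgeOkAux H (step v .Binv) .B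

/-- `w` labels a path in the Stallings graph `Γ(H)` starting at `v`. -/
def labelsPathFrom (H : Subgroup PSL2Z) : Coset H → List Letter → Prop
  | _, [] => True
  | v, ℓ :: w => edgeOk H v ℓ ∧ labelsPathFrom H (step v ℓ) w

/-- `w` labels a cycle at `v` in the Stallings graph `Γ(H)`. -/
def labelsCycleAt (H : Subgroup PSL2Z) (v : Coset H) (w : List Letter) : Prop :=
  labelsPathFrom H v w ∧ readW v w = v

/-- `v` is a vertex of the Stallings graph `Γ(H)`. -/
def StallingsVertex (H : Subgroup PSL2Z) (v : Coset H) : Prop :=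
  ∃ w p q : List Letter, NormalWord w ∧ evalWord w ∈ H ∧ w = p ++ q ∧
    readW (base H) p = v

/-- `H` is almost malnormal: `H ∩ H^x` is finite for every `x ∉ H`. -/
def AlmostMalnormal (H : Subgroup PSL2Z) : Prop :=
  ∀ x : PSL2Z, x ∉ H → {g : PSL2Z | g ∈ H ∧ x * g * x⁻¹ ∈ H}.Finite


/- ====================  Schreier graph lemmas  ==================== -/

theorem coset_eq_iff (H : Subgroup PSL2Z) (u v : PSL2Z) :
    (Quotient.mk (cosetSetoid H) u = Quotient.mk (cosetSetoid H) v) ↔ u * v⁻¹ ∈ H :=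
  ⟨fun h => Quotient.exact h, fun h => Quotient.sound h⟩

theorem step_mk (H : Subgroup PSL2Z) (u : PSL2Z) (ℓ : Letter) :
    step (H := H) (Quotient.mk (cosetSetoid H) u) ℓ = Quotient.mk (cosetSetoid H) (u * ℓ.toG) :=
  rfl

theorem readW_mk (H : Subgroup PSL2Z) (u : PSL2Z) (w : List Letter) :
    readW (H := H) (Quotient.mk (cosetSetoid H) u) w
      = Quotient.mk (cosetSetoid H) (u * evalWord w) := by
  induction w generalizing u with
  | nil => simp [readW]; rfl
  | cons ℓ t ih =>
    show readW (step (Quotient.mk (cosetSetoid H) u) ℓ) t = _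
    rw [step_mk, ih, evalWord_cons, mul_assoc]

theorem labelsPathFrom_of (H : Subgroup PSL2Z) :
    ∀ (w : List Letter) (v : Coset H),
      (∀ p ℓ s, w = p ++ ℓ :: s → edgeOkAux H (readW v p) ℓ) → labelsPathFrom H v w := by
  intro w
  induction w with
  | nil => intro v _; trivial
  | cons ℓ w' ih =>
    intro v h
    refine ⟨?_, ih (step v ℓ) (fun p ℓ' s hps => h (ℓ :: p) ℓ' s (by rw [hps]; rfl))⟩
    have h0 : edgeOkAux H v ℓ := h [] ℓ w' rfl
    cases ℓ
    · exact Or.inl h0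
    · exact Or.inl h0
    · exact Or.inl h0

theorem cpow_add (a b : ℕ) (c : List Letter) : cpow (a + b) c = cpow a c ++ cpow b c := by
  induction a with
  | zero => simp [cpow]
  | succ a ih =>
    rw [show a + 1 + b = (a + b) + 1 from by omega]
    show c ++ cpow (a + b) c = (c ++ cpow a c) ++ cpow b c
    rw [ih, List.append_assoc]

/- ====================  the edge lemma  ==================== -/

theorem edge_lemma (H : Subgroup PSL2Z) (c : List Letter) (hc : NormalWord c)
    (hclen : 2 ≤ c.length) (hcyc : ∀ x ∈ c.getLast?, ∀ y ∈ c.head?, AltPair x y)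
    (z : PSL2Z) (hz : z * evalWord c * z⁻¹ ∈ H) :
    labelsCycleAt H (Quotient.mk (cosetSetoid H) z) c := by
  set C := evalWord c with hCdef
  have habs : ∀ (u : PSL2Z) (n : ℕ),
      Quotient.mk (cosetSetoid H) (z * C ^ n * u) = Quotient.mk (cosetSetoid H) (z * u) := by
    intro u n
    rw [coset_eq_iff]
    have : (z * C ^ n * u) * (z * u)⁻¹ = (z * C * z⁻¹) ^ n := by rw [conj_pow']; group
    rw [this]
    exact pow_mem hz n
  obtain ⟨m, t', ht', hgt, hall⟩ := stab c hc hclen hcyc (φ z⁻¹ nwNil)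
  have heval_z : evalWord (φ z⁻¹ nwNil).1 = z⁻¹ := by
    have := eval_φ z⁻¹ nwNil
    simpa [nwNil] using this
  have heval_t' : evalWord t' = C ^ m * z⁻¹ := by
    have h0 := hall 0
    rw [show cpow 0 c ++ t' = t' from by simp [cpow]] at h0
    rw [← h0, eval_φ, heval_z, add_zero]
  set d := nf z with hddef
  have hd : NormalWord d := nf_normal z
  set k := d.length + 4 with hkdef
  have hkt : NormalWord (cpow k c ++ t') := norm_cpow_app hc hcyc hgt k
  obtain ⟨ii, M, jj, b1, b2, b3, b4, b5, heq⟩ := prep_decomp d hd (cpow k c ++ t') hkt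
  set W := (φ (evalWord d) ⟨cpow k c ++ t', hkt⟩).1 with hWdef
  have hWn : NormalWord W := (φ (evalWord d) ⟨cpow k c ++ t', hkt⟩).2
  have hWeval : evalWord W = z * C ^ (m + k) * z⁻¹ := by
    rw [hWdef, eval_φ, eval_nf, evalWord_append, eval_cpow, heval_t', ← hCdef]
    rw [show C ^ k * (C ^ m * z⁻¹) = C ^ (m + k) * z⁻¹ from by
      rw [← mul_assoc, ← pow_add, Nat.add_comm k m]]
    group
  have hWH : evalWord W ∈ H := by
    rw [hWeval, show z * C ^ (m + k) * z⁻¹ = (z * C * z⁻¹) ^ (m + k) from by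
      rw [conj_pow']]
    exact pow_mem hz _
  -- arithmetic on the cancellation bound
  set q := jj / c.length with hqdef
  set r := jj % c.length with hrdef
  have hqr : c.length * q + r = jj := Nat.div_add_mod jj c.length
  have hr : r < c.length := Nat.mod_lt _ (by omega)
  have hq : q + 2 ≤ k := by
    have h1 : q ≤ jj := Nat.div_le_self jj c.length
    omega
  have hsplit : cpow k c = (cpow q c ++ c) ++ cpow (k - q - 1) c := by
    rw [show k = q + (1 + (k - q - 1)) from by omega, cpow_add, cpow_add]
    rw [show cpow 1 c = c from by simp [cpow]]
    simp [List.append_assoc]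
  have hdrop : List.drop jj (cpow k c ++ t')
      = List.drop r c ++ (cpow (k - q - 1) c ++ t') := by
    rw [hsplit, List.append_assoc]
    rw [List.drop_append_of_le_length (by
      rw [List.length_append, length_cpow, Nat.mul_comm q c.length]; omega)]
    congr 1
    rw [show jj = (cpow q c).length + r from by
      rw [length_cpow, Nat.mul_comm q c.length]; omega]
    simp [List.drop_append]
  have hW : W = (List.take ii d ++ M)
      ++ (List.drop r c ++ (cpow (k - q - 1) c ++ t')) := by
    have h' := heq
    rw [hdrop] at h'
    exact h' 
  have hevalA : evalWord (List.take ii d ++ M)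
      = z * C ^ (q + 1) * (evalWord (List.drop r c))⁻¹ := by
    have h1 : evalWord W = evalWord (List.take ii d ++ M)
        * (evalWord (List.drop r c) * (C ^ (k - q - 1) * (C ^ m * z⁻¹))) := by
      rw [hW, evalWord_append, evalWord_append, evalWord_append, evalWord_append,
        eval_cpow, heval_t', ← hCdef]
    have h2 : evalWord (List.take ii d ++ M)
        = evalWord W * (evalWord (List.drop r c) * (C ^ (k - q - 1) * (C ^ m * z⁻¹)))⁻¹ := by
      rw [h1]; group
    rw [h2, hWeval]
    rw [show C ^ (m + k) = C ^ (q + 1) * (C ^ (k - q - 1) * C ^ m) from by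
      rw [← pow_add, ← pow_add]; congr 1; omega]
    group
  -- the cycle
  constructor
  · refine labelsPathFrom_of H c (Quotient.mk (cosetSetoid H) z) ?_
    intro p ℓ s hdec
    refine ⟨W, (List.take ii d ++ M) ++ List.drop r c ++ p,
      s ++ (cpow (k - q - 2) c ++ t'), hWn, hWH, ?_, ?_⟩
    · rw [hW, show cpow (k - q - 1) c = c ++ cpow (k - q - 2) c from by
        rw [show k - q - 1 = (k - q - 2) + 1 from by omega]; rfl, hdec]
      simp [List.append_assoc]
    · show readW (Quotient.mk (cosetSetoid H) 1) _ = _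
      rw [readW_mk, readW_mk, one_mul, evalWord_append, evalWord_append, hevalA]
      rw [show z * C ^ (q + 1) * (evalWord (List.drop r c))⁻¹ * evalWord (List.drop r c)
          * evalWord p = z * C ^ (q + 1) * evalWord p from by group]
      exact habs (evalWord p) (q + 1)
  · rw [readW_mk]; refine (coset_eq_iff H _ _).2 ?_
    rw [show z * evalWord c * z⁻¹ = z * C * z⁻¹ from rfl]
    exact hz

/- ====================  small-word torsion  ==================== -/

theorem finorder_small {c : List Letter} (h : c.length ≤ 1) : IsOfFinOrder (evalWord c) := by
  match c, h with
  | [], _ => rw [evalWord_nil]; exact IsOfFinOrder.one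
  | [ℓ], _ => rw [evalWord_singleton]; exact finorder_letter ℓ

/-- A finitely generated subgroup `H ≤ PSL₂(ℤ)` is almost malnormal if and only
if there do not exist two distinct vertices `p, q` of its Stallings graph and an
infinite-order element `g` of `PSL₂(ℤ)` whose normal form labels cycles at both
`p` and `q`. -/
theorem almost_malnormal_iff_no_double_cycle (H : Subgroup PSL2Z) (hH : H.FG) :
    AlmostMalnormal H ↔
      ¬ ∃ (p q : Coset H) (g : PSL2Z) (w : List Letter),
        p ≠ q ∧ NormalWord w ∧ evalWord w = g ∧ ¬ IsOfFinOrder g ∧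
        labelsCycleAt H p w ∧ labelsCycleAt H q w := by
  constructor
  · -- almost malnormal ⟹ no double cycle
    rintro halm ⟨p, q, g, w, hpq, hwn, hwe, hord, ⟨_, hp2⟩, ⟨_, hq2⟩⟩
    obtain ⟨y₁, hy₁⟩ := Quotient.exists_rep p
    obtain ⟨y₂, hy₂⟩ := Quotient.exists_rep q
    subst hy₁; subst hy₂
    rw [readW_mk] at hp2 hq2
    replace hp2 := (coset_eq_iff H _ _).1 hp2
    replace hq2 := (coset_eq_iff H _ _).1 hq2
    rw [hwe] at hp2 hq2
    have h₁ : y₁ * g * y₁⁻¹ ∈ H := by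
      rw [show y₁ * g * y₁⁻¹ = y₁ * g * y₁⁻¹ from rfl]
      have : y₁ * g * y₁⁻¹ = y₁ * g * y₁⁻¹ := rfl
      simpa [mul_assoc] using hp2
    have h₂ : y₂ * g * y₂⁻¹ ∈ H := by simpa [mul_assoc] using hq2
    have hznotH : y₁ * y₂⁻¹ ∉ H := fun hmem => hpq ((coset_eq_iff H y₁ y₂).2 hmem)
    have hfin := halm (y₁ * y₂⁻¹) hznotH
    have hio : ¬ IsOfFinOrder (y₂ * g * y₂⁻¹) := by
      rw [conj_finorder_iff]
      exact hord
    refine hfin.not_infinite (Set.infinite_of_injective_forall_mem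
      (f := fun n : ℕ => (y₂ * g * y₂⁻¹) ^ n) ?_ ?_)
    · exact injective_pow_iff_not_isOfFinOrder.2 hio
    · intro n
      refine ⟨pow_mem h₂ n, ?_⟩
      have : y₁ * y₂⁻¹ * (y₂ * g * y₂⁻¹) ^ n * (y₁ * y₂⁻¹)⁻¹ = (y₁ * g * y₁⁻¹) ^ n := by
        rw [conj_pow', conj_pow']; group
      rw [this]
      exact pow_mem h₁ n
  · -- no double cycle ⟹ almost malnormal
    intro hno x hx
    by_contra hfin
    have hinf : {g : PSL2Z | g ∈ H ∧ x * g * x⁻¹ ∈ H}.Infinite := hfin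
    have hmul : ∀ a ∈ {g : PSL2Z | g ∈ H ∧ x * g * x⁻¹ ∈ H},
        ∀ b ∈ {g : PSL2Z | g ∈ H ∧ x * g * x⁻¹ ∈ H},
        a * b ∈ {g : PSL2Z | g ∈ H ∧ x * g * x⁻¹ ∈ H} := by
      intro a ha b hb
      refine ⟨mul_mem ha.1 hb.1, ?_⟩
      rw [show x * (a * b) * x⁻¹ = (x * a * x⁻¹) * (x * b * x⁻¹) from by group]
      exact mul_mem ha.2 hb.2
    obtain ⟨g, hgS, hgio⟩ := exists_nontorsion _ hmul hinf
    obtain ⟨E, c, hcn, hev, hcyc⟩ := cycred (nf g) (nf_normal g)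
    rw [eval_nf] at hev
    rcases hcyc with hsmall | ⟨hclen, hccyc⟩
    · exact absurd (by rw [hev]; exact conj_finorder (finorder_small hsmall)) hgio
    · refine hno ⟨Quotient.mk (cosetSetoid H) E, Quotient.mk (cosetSetoid H) (x * E),
        evalWord c, c, ?_, hcn, rfl, infinite_order_of_cyc hcn hclen hccyc, ?_, ?_⟩
      · intro hEq
        replace hEq := (coset_eq_iff H _ _).1 hEq
        rw [show E * (x * E)⁻¹ = x⁻¹ from by group] at hEq
        exact hx (inv_mem_iff.1 hEq)
      · refine edge_lemma H c hcn hclen hccyc E ?_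
        rw [← hev]
        exact hgS.1
      · refine edge_lemma H c hcn hclen hccyc (x * E) ?_
        rw [show x * E * evalWord c * (x * E)⁻¹ = x * (E * evalWord c * E⁻¹) * x⁻¹ from by group,
          ← hev]
        exact hgS.2
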